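/- Let (≿_i)_{i∈N} be a profile of dichotomous preferences, and identify each outcome x ∈ X with the vector x ∈ {0,1}^N where x_i = 1 iff x is acceptable to agent i. Then every ex-post efficient lottery is ex-ante efficient if and only if there exists a vector λ ∈ ℝ^N with λ_i > 0 for all i ∈ N such that the dot product ∑_{i∈N} λ_i x_i takes the same value for all Pareto optimal outcomes x. -/

import Mathlib

attribute [local instance] Classical.propDecidable

/-- The strict part of a preference relation. -/
def strictPref {X : Type*} (r : X → X → Prop) (x y : X) : Prop := r x y ∧ ¬ r y x

/-- A preference: a complete (total) and transitive binary relation. -/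
def IsPrefOrder {X : Type*} (r : X → X → Prop) : Prop :=
  (∀ x y, r x y ∨ r y x) ∧ Transitive r

/-- A lottery over the finite set of outcomes `X`. -/
def IsLottery {X : Type*} [Fintype X] (p : X → ℝ) : Prop :=
  (∀ x, 0 ≤ p x) ∧ ∑ x, p x = 1

/-- Total weight a lottery `p` places on outcomes strictly preferred to `x`. -/
noncomputable def upWeight {X : Type*} [Fintype X] (r : X → X → Prop) (p : X → ℝ) (x : X) : ℝ :=
  ∑ y ∈ Finset.univ.filter (fun y => strictPref r y x), p y

/-- First-order stochastic dominance (weak): `p ≿ q`. -/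
def SDge {X : Type*} [Fintype X] (r : X → X → Prop) (p q : X → ℝ) : Prop :=
  ∀ x, upWeight r q x ≤ upWeight r p x

/-- First-order stochastic dominance (strict): `p ≻ q`. -/
def SDgt {X : Type*} [Fintype X] (r : X → X → Prop) (p q : X → ℝ) : Prop :=
  SDge r p q ∧ ∃ x, upWeight r q x < upWeight r p x

/-- A lottery `p` is ex-ante efficient if no lottery weakly SD-dominates it for all agents
and strictly for some agent. -/
def ExAnteEff {X N : Type*} [Fintype X] (pref : N → X → X → Prop) (p : X → ℝ) : Prop :=
  ¬ ∃ q : X → ℝ, IsLottery q ∧ (∀ i, SDge (pref i) q p) ∧ ∃ j, SDgt (pref j) q p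

/-- An outcome is Pareto optimal if no outcome is weakly better for all agents and
strictly better for some agent. -/
def ParetoOptimal {X N : Type*} (pref : N → X → X → Prop) (x : X) : Prop :=
  ¬ ∃ y, (∀ i, pref i y x) ∧ ∃ j, strictPref (pref j) y x

/-- A lottery is ex-post efficient if it is supported on Pareto optimal outcomes. -/
def ExPostEff {X N : Type*} [Fintype X] (pref : N → X → X → Prop) (p : X → ℝ) : Prop :=
  ∀ x, 0 < p x → ParetoOptimal pref x

/-- `u` is a utility representation of the preference `r`. -/
def Represents {X : Type*} (u : X → ℝ) (r : X → X → Prop) : Prop :=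
  ∀ x y, (u y ≤ u x ↔ r x y)

/-- A preference is dichotomous with set `A` of acceptable outcomes. -/
def Dichotomous {X : Type*} (r : X → X → Prop) (A : Set X) : Prop :=
  ∀ x y, r x y ↔ (x ∈ A ∨ y ∉ A)

/- ================= Auxiliary material ================= -/

/-- Stiemke-type lemma: a subspace containing no nonzero nonnegative vector has a
strictly positive vector in its orthogonal complement. -/
lemma stiemke {n : Type*} [Fintype n] (V : Submodule ℝ (n → ℝ))
    (h : ∀ w ∈ V, (∀ i, 0 ≤ w i) → w = 0) :
    ∃ lam : n → ℝ, (∀ i, 0 < lam i) ∧ ∀ w ∈ V, ∑ i, lam i * w i = 0 := by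
  have hdisj : Disjoint (V : Set (n → ℝ)) (stdSimplex ℝ n) := by
    rw [Set.disjoint_left]
    intro w hwV hwS
    have hw0 : w = 0 := h w hwV hwS.1
    have := hwS.2
    rw [hw0] at this
    simp at this
  obtain ⟨f, u, v, hfV, huv, hfS⟩ :=
    geometric_hahn_banach_closed_compact V.convex
      (Submodule.closed_of_finiteDimensional V) (convex_stdSimplex ℝ n)
      (isCompact_stdSimplex ℝ n) hdisj
  have hfV0 : ∀ w ∈ V, f w = 0 := by
    intro w hw
    by_contra hne
    have hmem : ∀ t : ℝ, f (t • w) < u := fun t => hfV _ (V.smul_mem t hw)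
    have h1 := hmem ((u + |u| + 1) / f w)
    rw [map_smul, smul_eq_mul, div_mul_cancel₀ _ hne] at h1
    have := abs_nonneg u
    have := le_abs_self u
    linarith
  have hu0 : 0 < u := by
    have := hfV 0 V.zero_mem
    simpa using this
  refine ⟨fun i => f (fun j => if i = j then 1 else 0), ?_, ?_⟩
  · intro i
    have hmem : (fun j => if i = j then (1:ℝ) else 0) ∈ stdSimplex ℝ n := by
      constructor
      · intro j; by_cases hij : i = j <;> simp [hij]
      · simp
    have := hfS _ hmem
    linarith
  · intro w hw
    have hrep := pi_eq_sum_univ w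
    calc ∑ i, f (fun j => if i = j then (1:ℝ) else 0) * w i
        = f w := by
          conv_rhs => rw [hrep]
          rw [map_sum]
          apply Finset.sum_congr rfl
          intro i _
          rw [map_smul, smul_eq_mul]
          ring
      _ = 0 := hfV0 w hw

/-- acceptable mass -/
noncomputable def uval {X : Type*} [Fintype X] (A : Set X) (p : X → ℝ) : ℝ :=
  ∑ x, if x ∈ A then p x else 0

lemma strictPref_dich {X : Type*} {r : X → X → Prop} {A : Set X} (h : Dichotomous r A)
    (y x : X) : strictPref r y x ↔ (y ∈ A ∧ x ∉ A) := by
  unfold strictPref; rw [h, h]; tauto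

lemma upWeight_dich {X : Type*} [Fintype X] {r : X → X → Prop} {A : Set X}
    (h : Dichotomous r A) (p : X → ℝ) (x : X) :
    upWeight r p x = if x ∈ A then 0 else uval A p := by
  unfold upWeight uval
  by_cases hx : x ∈ A
  · simp only [hx, if_true]
    apply Finset.sum_eq_zero
    intro y hy
    rw [Finset.mem_filter, strictPref_dich h] at hy
    exact absurd hx hy.2.2
  · simp only [hx, if_false]
    rw [Finset.sum_filter]
    apply Finset.sum_congr rfl
    intro y _
    rw [strictPref_dich h]
    simp [hx]

lemma uval_lottery {X : Type*} [Fintype X] {A : Set X} {p : X → ℝ} (hA : ∀ x, x ∈ A)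
    (hp : IsLottery p) : uval A p = 1 := by
  unfold uval
  rw [← hp.2]
  exact Finset.sum_congr rfl fun x _ => by simp [hA x]

lemma SDge_of_uval {X : Type*} [Fintype X] {r : X → X → Prop} {A : Set X}
    (h : Dichotomous r A) {p q : X → ℝ} (hle : uval A p ≤ uval A q) : SDge r q p := by
  intro x
  rw [upWeight_dich h, upWeight_dich h]
  by_cases hx : x ∈ A <;> simp [hx, hle]

lemma uval_le_of_SDge {X : Type*} [Fintype X] {r : X → X → Prop} {A : Set X}
    (h : Dichotomous r A) {p q : X → ℝ} (hp : IsLottery p) (hq : IsLottery q)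
    (hsd : SDge r q p) : uval A p ≤ uval A q := by
  by_cases hA : ∃ x, x ∉ A
  · obtain ⟨x, hx⟩ := hA
    have := hsd x
    rw [upWeight_dich h, upWeight_dich h] at this
    simpa [hx] using this
  · push_neg at hA
    rw [uval_lottery hA hp, uval_lottery hA hq]

lemma SDgt_of_uval {X : Type*} [Fintype X] {r : X → X → Prop} {A : Set X}
    (h : Dichotomous r A) {p q : X → ℝ} (hp : IsLottery p) (hq : IsLottery q)
    (hlt : uval A p < uval A q) : SDgt r q p := by
  refine ⟨SDge_of_uval h hlt.le, ?_⟩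
  have hA : ∃ x, x ∉ A := by
    by_contra hc
    push_neg at hc
    rw [uval_lottery hc hp, uval_lottery hc hq] at hlt
    exact lt_irrefl _ hlt
  obtain ⟨x, hx⟩ := hA
  refine ⟨x, ?_⟩
  rw [upWeight_dich h, upWeight_dich h]
  simpa [hx] using hlt

lemma uval_lt_of_SDgt {X : Type*} [Fintype X] {r : X → X → Prop} {A : Set X}
    (h : Dichotomous r A) {p q : X → ℝ} (hsd : SDgt r q p) : uval A p < uval A q := by
  obtain ⟨-, x, hx⟩ := hsd
  rw [upWeight_dich h, upWeight_dich h] at hx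
  by_cases hxA : x ∈ A
  · simp [hxA] at hx
  · simpa [hxA] using hx

lemma pareto_dich {X N : Type*} {pref : N → X → X → Prop} {A : N → Set X}
    (hpref : ∀ i, Dichotomous (pref i) (A i)) (x : X) :
    ParetoOptimal pref x ↔
      ¬ ∃ y, (∀ i, x ∈ A i → y ∈ A i) ∧ ∃ j, y ∈ A j ∧ x ∉ A j := by
  unfold ParetoOptimal
  constructor
  · rintro h ⟨y, hw, j, hj⟩
    exact h ⟨y, fun i => (hpref i y x).2 (by tauto), j, (strictPref_dich (hpref j) y x).2 hj⟩
  · rintro h ⟨y, hw, j, hj⟩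
    refine h ⟨y, fun i hxi => ?_, j, (strictPref_dich (hpref j) y x).1 hj⟩
    rcases (hpref i y x).1 (hw i) with h1 | h1
    · exact h1
    · exact absurd hxi h1

/-- every outcome is weakly dominated by a Pareto optimal outcome -/
lemma exists_pareto_dom {X N : Type*} [Fintype X] [Fintype N] {pref : N → X → X → Prop}
    {A : N → Set X} (hpref : ∀ i, Dichotomous (pref i) (A i)) (x : X) :
    ∃ y, ParetoOptimal pref y ∧ ∀ i, x ∈ A i → y ∈ A i := by
  classical
  set S : Finset X := Finset.univ.filter (fun y => ∀ i, x ∈ A i → y ∈ A i) with hS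
  have hxS : x ∈ S := by simp [hS]
  obtain ⟨y, hyS, hymax⟩ := S.exists_max_image
    (fun y => (Finset.univ.filter (fun i => y ∈ A i)).card) ⟨x, hxS⟩
  rw [hS, Finset.mem_filter] at hyS
  refine ⟨y, ?_, hyS.2⟩
  rw [pareto_dich hpref]
  rintro ⟨z, hw, j, hj⟩
  have hzS : z ∈ S := by
    rw [hS, Finset.mem_filter]
    exact ⟨Finset.mem_univ z, fun i hi => hw i (hyS.2 i hi)⟩
  have hsub : Finset.univ.filter (fun i => y ∈ A i) ⊂ Finset.univ.filter (fun i => z ∈ A i) := by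
    constructor
    · intro i hi
      rw [Finset.mem_filter] at hi ⊢
      exact ⟨hi.1, hw i hi.2⟩
    · intro hcon
      have := hcon (by simp [hj.1] : j ∈ Finset.univ.filter (fun i => z ∈ A i))
      rw [Finset.mem_filter] at this
      exact hj.2 this.2
  exact absurd (hymax z hzS) (not_le.mpr (Finset.card_lt_card hsub))

/-- The submodule of signed mixtures over a predicate with total mass zero, mapped by `v`. -/
def mixSub {X N : Type*} [Fintype X] (P : X → Prop) (v : X → N → ℝ) :
    Submodule ℝ (N → ℝ) where
  carrier := {w | ∃ t : X → ℝ, (∀ z, t z ≠ 0 → P z) ∧ (∑ z, t z) = 0 ∧ w = ∑ z, t z • v z}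
  zero_mem' := ⟨0, by simp⟩
  add_mem' := by
    rintro a b ⟨t1, h1, h2, h3⟩ ⟨s1, g1, g2, g3⟩
    refine ⟨t1 + s1, fun z hz => ?_, by simp [Finset.sum_add_distrib, h2, g2], ?_⟩
    · by_cases ht : t1 z = 0
      · exact g1 z (by simpa [ht] using hz)
      · exact h1 z ht
    · rw [h3, g3, ← Finset.sum_add_distrib]
      apply Finset.sum_congr rfl
      intro z _
      simp [add_smul]
  smul_mem' := by
    rintro c a ⟨t1, h1, h2, h3⟩
    refine ⟨c • t1, fun z hz => h1 z (by simpa using fun h => hz (by simp [h])), ?_, ?_⟩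
    · simp [← Finset.mul_sum, h2]
    · rw [h3, Finset.smul_sum]
      apply Finset.sum_congr rfl
      intro z _
      simp [smul_smul]

lemma max_sub_max_neg (a : ℝ) : max a 0 - max (-a) 0 = a := by
  rcases le_total a 0 with h | h
  · rw [max_eq_right h, max_eq_left (neg_nonneg.mpr h)]; ring
  · rw [max_eq_left h, max_eq_right (neg_nonpos.mpr h)]; ring

/- ================= Main theorem ================= -/

/-- With dichotomous preferences, every ex-post efficient lottery is ex-ante
efficient iff there is a strictly positive vector `lam` whose dot product with (the 0-1
vector of) each Pareto optimal outcome is constant. -/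
theorem stmt_15 {X N : Type*} [Fintype X] [Nonempty X] [Fintype N] [Nonempty N]
    (pref : N → X → X → Prop) (A : N → Set X)
    (hpref : ∀ i, Dichotomous (pref i) (A i)) :
    (∀ p : X → ℝ, IsLottery p → ExPostEff pref p → ExAnteEff pref p) ↔
      ∃ lam : N → ℝ, (∀ i, 0 < lam i) ∧
        ∃ c : ℝ, ∀ x, ParetoOptimal pref x →
          (∑ i, if x ∈ A i then lam i else 0) = c := by
  constructor
  · -- forward direction
    intro H
    set v : X → N → ℝ := fun x i => if x ∈ A i then 1 else 0 with hv
    have hVpos : ∀ w ∈ mixSub (ParetoOptimal pref) v, (∀ i, 0 ≤ w i) → w = 0 := by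
      rintro w ⟨t, ht1, ht2, ht3⟩ hwn
      by_contra hw0
      obtain ⟨j, hj⟩ : ∃ j, w j ≠ 0 := Function.ne_iff.mp hw0
      have hjpos : 0 < w j := lt_of_le_of_ne (hwn j) (Ne.symm hj)
      have hts : ∃ x, 0 < t x := by
        by_contra hc
        push_neg at hc
        have hz : ∀ x ∈ Finset.univ, t x = 0 :=
          (Finset.sum_eq_zero_iff_of_nonpos (fun x _ => hc x)).mp ht2
        have : w = 0 := by
          rw [ht3]
          apply Finset.sum_eq_zero
          intro x hx
          rw [hz x hx, zero_smul]
        exact hw0 this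
      set tp : X → ℝ := fun x => max (t x) 0 with htpdef
      set tm : X → ℝ := fun x => max (-t x) 0 with htmdef
      set s : ℝ := ∑ x, tp x with hsdef
      have hspos : 0 < s := by
        obtain ⟨x, hx⟩ := hts
        exact Finset.sum_pos' (fun y _ => le_max_right _ _)
          ⟨x, Finset.mem_univ x, lt_of_lt_of_le hx (le_max_left _ _)⟩
      have htm_eq : ∀ x, tm x = tp x - t x := by
        intro x
        have := max_sub_max_neg (t x)
        simp only [htpdef, htmdef]
        linarith
      have htmsum : ∑ x, tm x = s := by
        rw [Finset.sum_congr rfl (fun x _ => htm_eq x), Finset.sum_sub_distrib, ht2, sub_zero]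
      set q : X → ℝ := fun x => tp x / s with hqdef
      set r : X → ℝ := fun x => tm x / s with hrdef
      have hql : IsLottery q :=
        ⟨fun x => div_nonneg (le_max_right _ _) hspos.le,
         by rw [hqdef]; rw [← Finset.sum_div, div_self hspos.ne']⟩
      have hrl : IsLottery r :=
        ⟨fun x => div_nonneg (le_max_right _ _) hspos.le,
         by rw [hrdef]; rw [← Finset.sum_div, htmsum, div_self hspos.ne']⟩
      have hre : ExPostEff pref r := by
        intro x hx
        apply ht1 x
        intro h0
        have hr0 : r x = 0 := by simp [hrdef, htmdef, h0]
        rw [hr0] at hx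
        exact lt_irrefl _ hx
      have hkey : ∀ i, uval (A i) q - uval (A i) r = w i / s := by
        intro i
        have hwi : w i = ∑ x, if x ∈ A i then t x else 0 := by
          rw [ht3, Finset.sum_apply]
          apply Finset.sum_congr rfl
          intro x _
          simp [hv, Pi.smul_apply, smul_eq_mul, mul_ite, mul_one, mul_zero]
        unfold uval
        rw [← Finset.sum_sub_distrib, hwi, Finset.sum_div]
        apply Finset.sum_congr rfl
        intro x _
        by_cases hx : x ∈ A i
        · simp only [hx, if_true]
          show q x - r x = t x / s
          rw [hqdef, hrdef]
          rw [div_sub_div_same]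
          congr 1
          rw [htm_eq]
          ring
        · simp [hx]
      have hge : ∀ i, SDge (pref i) q r := by
        intro i
        apply SDge_of_uval (hpref i)
        have h1 := hkey i
        have h2 : 0 ≤ w i / s := div_nonneg (hwn i) hspos.le
        linarith
      have hgt : SDgt (pref j) q r := by
        apply SDgt_of_uval (hpref j) hrl hql
        have h1 := hkey j
        have h2 : 0 < w j / s := div_pos hjpos hspos
        linarith
      exact H r hrl hre ⟨q, hql, hge, j, hgt⟩
    obtain ⟨lam, hlam, horth⟩ := stiemke _ hVpos
    obtain ⟨x0, hx0, -⟩ := exists_pareto_dom hpref (Classical.arbitrary X)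
    refine ⟨lam, hlam, ∑ i, if x0 ∈ A i then lam i else 0, ?_⟩
    intro x hx
    have hmem : (v x - v x0) ∈ mixSub (ParetoOptimal pref) v := by
      refine ⟨fun z => (if z = x then 1 else 0) - (if z = x0 then 1 else 0), ?_, ?_, ?_⟩
      · intro z hz
        by_cases h1 : z = x
        · rw [h1]; exact hx
        · by_cases h2 : z = x0
          · rw [h2]; exact hx0
          · exfalso; apply hz; simp [h1, h2]
      · rw [Finset.sum_sub_distrib]
        simp
      · have e1 : ∀ y : X, ∑ z, (if z = y then (1:ℝ) else 0) • v z = v y := by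
          intro y
          simp [ite_smul]
        calc v x - v x0
            = (∑ z, (if z = x then (1:ℝ) else 0) • v z)
              - ∑ z, (if z = x0 then (1:ℝ) else 0) • v z := by rw [e1, e1]
          _ = ∑ z, ((if z = x then (1:ℝ) else 0) - (if z = x0 then 1 else 0)) • v z := by
              rw [← Finset.sum_sub_distrib]
              apply Finset.sum_congr rfl
              intro z _
              rw [sub_smul]
    have h0 := horth _ hmem
    have expand : ∀ y : X, ∑ i, lam i * v y i = ∑ i, if y ∈ A i then lam i else 0 := by
      intro y
      apply Finset.sum_congr rfl
      intro i _
      simp [hv, mul_ite, mul_one, mul_zero]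
    have hsplit : ∑ i, lam i * (v x - v x0) i
        = (∑ i, lam i * v x i) - ∑ i, lam i * v x0 i := by
      rw [← Finset.sum_sub_distrib]
      apply Finset.sum_congr rfl
      intro i _
      simp [Pi.sub_apply]
      ring
    rw [hsplit, expand, expand] at h0
    linarith
  · -- backward direction
    rintro ⟨lam, hpos, c, hc⟩ p hp hpe
    rintro ⟨q, hq, hge, j, hgt⟩
    set sv : X → ℝ := fun x => ∑ i, if x ∈ A i then lam i else 0 with hsv
    have hsc : ∀ x, sv x ≤ c := by
      intro x
      obtain ⟨y, hyPO, hyd⟩ := exists_pareto_dom hpref x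
      have h1 : sv x ≤ sv y := by
        apply Finset.sum_le_sum
        intro i _
        by_cases hx : x ∈ A i
        · simp [hx, hyd i hx]
        · by_cases hy : y ∈ A i <;> simp [hx, hy, (hpos i).le]
      calc sv x ≤ sv y := h1
        _ = c := hc y hyPO
    have hswap : ∀ g : X → ℝ, ∑ i, lam i * uval (A i) g = ∑ x, g x * sv x := by
      intro g
      calc ∑ i, lam i * uval (A i) g
          = ∑ i, ∑ x, if x ∈ A i then lam i * g x else 0 := by
            apply Finset.sum_congr rfl
            intro i _
            unfold uval
            rw [Finset.mul_sum]
            apply Finset.sum_congr rfl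
            intro x _
            simp only [mul_ite, mul_zero]
        _ = ∑ x, ∑ i, if x ∈ A i then lam i * g x else 0 := Finset.sum_comm
        _ = ∑ x, g x * sv x := by
            apply Finset.sum_congr rfl
            intro x _
            rw [hsv, Finset.mul_sum]
            apply Finset.sum_congr rfl
            intro i _
            split_ifs <;> ring
    have h1 : ∑ i, lam i * uval (A i) p = c := by
      rw [hswap p]
      have : ∀ x ∈ Finset.univ, p x * sv x = p x * c := by
        intro x _
        rcases eq_or_lt_of_le (hp.1 x) with h | h
        · rw [← h]; ring
        · rw [show sv x = c from hc x (hpe x h)]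
      rw [Finset.sum_congr rfl this, ← Finset.sum_mul, hp.2, one_mul]
    have h2 : ∑ i, lam i * uval (A i) q ≤ c := by
      rw [hswap q]
      calc ∑ x, q x * sv x ≤ ∑ x, q x * c :=
            Finset.sum_le_sum fun x _ => mul_le_mul_of_nonneg_left (hsc x) (hq.1 x)
        _ = c := by rw [← Finset.sum_mul, hq.2, one_mul]
    have h3 : ∑ i, lam i * uval (A i) p < ∑ i, lam i * uval (A i) q := by
      apply Finset.sum_lt_sum
      · intro i _
        exact mul_le_mul_of_nonneg_left (uval_le_of_SDge (hpref i) hp hq (hge i)) (hpos i).le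
      · exact ⟨j, Finset.mem_univ j,
          mul_lt_mul_of_pos_left (uval_lt_of_SDgt (hpref j) hgt) (hpos j)⟩
    linarith
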